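/- arXiv:1612.05514 — 2 statements merged into one kernel-verified Lean document; each statement's English description precedes it below -/
import Mathlib

section
/- Let M be a Maya diagram with 0 ∈ M and let M' = M − 1. Let (s₁,…,s_p | t₁,…,t_q) be the Frobenius symbol of M (so that t_q = 0). Then the Hermite pseudo-Wronskians satisfy H_M = (−1)^p · 2^{q−1} · (∏_{b=1}^{q−1} t_b) · H_{M'} as functions on ℝ. -/
/-- A Maya diagram: a set of integers containing only finitely many non-negative
integers and excluding only finitely many negative integers. -/
def IsMaya (M : Set ℤ) : Prop :=
  {m : ℤ | m ∈ M ∧ 0 ≤ m}.Finite ∧ {m : ℤ | m < 0 ∧ m ∉ M}.Finite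

/-- The shifted Maya diagram `M - k = {m - k : m ∈ M}`. -/
def shiftM (M : Set ℤ) (k : ℤ) : Set ℤ := {m : ℤ | m + k ∈ M}

/-- `M₊`, viewed as a subset of ℕ. -/
def MayaPlus (M : Set ℤ) : Set ℕ := {a : ℕ | (a : ℤ) ∈ M}

/-- `M₋ = {-m-1 : m < 0, m ∉ M}`, viewed as a subset of ℕ. -/
def MayaMinus (M : Set ℤ) : Set ℕ := {a : ℕ | (-(a : ℤ) - 1) ∉ M}

/-- The girth `|M| = #M₋ + #M₊`. -/
noncomputable def girth (M : Set ℤ) : ℕ := (MayaMinus M).ncard + (MayaPlus M).ncard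

/-- Physicists' Hermite polynomial `H_n(x) = (-1)^n e^{x²} Dⁿ e^{-x²}`, as a real function. -/
noncomputable def physHermite (n : ℕ) : ℝ → ℝ :=
  fun x => (-1 : ℝ) ^ n * Real.exp (x ^ 2) * iteratedDeriv n (fun y => Real.exp (-y ^ 2)) x

/-- The complex Hermite function `(-1)^n e^{z²} Dⁿ e^{-z²}`. -/
noncomputable def hermiteC (n : ℕ) : ℂ → ℂ :=
  fun z => (-1 : ℂ) ^ n * Complex.exp (z ^ 2) * iteratedDeriv n (fun w => Complex.exp (-w ^ 2)) z

/-- Conjugate Hermite polynomial `θ_n(x) = i^{-n} H_n(i x)`, as a real function. -/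
noncomputable def conjHermite (n : ℕ) : ℝ → ℝ :=
  fun x => (Complex.I ^ (-(n : ℤ)) * hermiteC n (Complex.I * x)).re

/-- The Hermite pseudo-Wronskian of a Maya diagram with Frobenius symbol
`(s₁,…,s_p | t₁,…,t_q)`:
`H_M(x) = e^{-p x²} · Wr[e^{x²}θ_{s₁}, …, e^{x²}θ_{s_p}, H_{t_q}, …, H_{t₁}](x)`.
Here `s i` is `s_{i+1}` and `t j` is `t_{j+1}` (0-based indexing). -/
noncomputable def pW (p q : ℕ) (s : Fin p → ℕ) (t : Fin q → ℕ) (x : ℝ) : ℝ :=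
  Real.exp (-(p : ℝ) * x ^ 2) *
    Matrix.det (Matrix.of fun i k : Fin (p + q) =>
      iteratedDeriv (k : ℕ)
        (fun y => if h : (i : ℕ) < p then Real.exp (y ^ 2) * conjHermite (s ⟨i, h⟩) y
          else physHermite (t ⟨p + q - 1 - (i : ℕ), by have := i.isLt; omega⟩) y) x)

/-- `(s₁,…,s_p | t₁,…,t_q)` is the Frobenius symbol of `M`. -/
def IsFrobenius {p q : ℕ} (M : Set ℤ) (s : Fin p → ℕ) (t : Fin q → ℕ) : Prop :=
  StrictAnti s ∧ StrictAnti t ∧ Set.range s = MayaMinus M ∧ Set.range t = MayaPlus M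

/-- `i_n = #{m ∉ M : m < n}`. -/
noncomputable def iN (M : Set ℤ) (n : ℤ) : ℕ := {m : ℤ | m ∉ M ∧ m < n}.ncard

/-- `j_n = #{m ∈ M : m ≥ n}`. -/
noncomputable def jN (M : Set ℤ) (n : ℤ) : ℕ := {m : ℤ | m ∈ M ∧ n ≤ m}.ncard

/-- `M` is in standard form. -/
def IsStandard (M : Set ℤ) : Prop := 0 ∉ M ∧ ∀ m : ℤ, m < 0 → m ∈ M


open Polynomial

noncomputable def PH : ℕ → Polynomial ℝ
  | 0 => 1
  | n+1 => 2 * X * PH n - derivative (PH n)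

noncomputable def QH : ℕ → Polynomial ℝ
  | 0 => 1
  | n+1 => 2 * X * QH n + derivative (QH n)

lemma derivative_PH : ∀ n : ℕ, derivative (PH (n+1)) = C (2*(n+1) : ℝ) * PH n := by
  intro n
  induction n with
  | zero => simp [PH, map_ofNat]
  | succ m ih =>
    have h2 : PH (m+1) = 2 * X * PH m - derivative (PH m) := rfl
    show derivative (2 * X * PH (m+1) - derivative (PH (m+1))) = _
    rw [ih]
    simp only [derivative_sub, derivative_mul, derivative_C, derivative_X, derivative_ofNat]
    rw [ih, h2]
    simp only [C_mul, C_add, map_ofNat, C_1, Nat.cast_add, Nat.cast_one]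
    ring

lemma iter_exp_complex (n : ℕ) :
    iteratedDeriv n (fun w : ℂ => Complex.exp (-w^2)) =
      fun z => (-1:ℂ)^n * aeval z (PH n) * Complex.exp (-z^2) := by
  induction n with
  | zero => funext z; simp [PH]
  | succ m ih =>
    funext z
    rw [iteratedDeriv_succ, ih]
    have hd1 : DifferentiableAt ℂ (fun z : ℂ => (-1:ℂ)^m * aeval z (PH m)) z := by
      exact ((PH m).differentiable_aeval z).const_mul _
    have hd2 : DifferentiableAt ℂ (fun z : ℂ => Complex.exp (-z^2)) z := by
      exact (Complex.differentiable_exp.comp ((differentiable_id.pow 2).neg)) z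
    rw [show (fun z : ℂ => (-1:ℂ)^m * aeval z (PH m) * Complex.exp (-z^2)) =
      (fun z : ℂ => ((-1:ℂ)^m * aeval z (PH m)) * Complex.exp (-z^2)) from rfl]
    rw [deriv_fun_mul hd1 hd2]
    rw [deriv_const_mul _ ((PH m).differentiable_aeval z), Polynomial.deriv_aeval]
    have : deriv (fun z : ℂ => Complex.exp (-z^2)) z = (-2*z) * Complex.exp (-z^2) := by
      have h : HasDerivAt (fun z : ℂ => Complex.exp (-z^2)) ((-2*z) * Complex.exp (-z^2)) z := by
        have h1 : HasDerivAt (fun z : ℂ => -z^2) (-(2*z)) z := by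
          simpa [Pi.neg_def] using ((hasDerivAt_pow 2 z).neg)
        simpa [mul_comm] using h1.cexp
      exact h.deriv
    rw [this]
    have hP : PH (m+1) = 2 * X * PH m - derivative (PH m) := rfl
    rw [hP]
    simp only [map_sub, map_mul, aeval_X, map_ofNat]
    ring

lemma hermiteC_eq (n : ℕ) (z : ℂ) : hermiteC n z = aeval z (PH n) := by
  unfold hermiteC
  rw [iter_exp_complex]
  have : Complex.exp (z^2) * Complex.exp (-z^2) = 1 := by
    rw [← Complex.exp_add]; ring_nf; exact Complex.exp_zero
  have hsq : ((-1:ℂ)^n * ((-1:ℂ)^n) : ℂ) = 1 := by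
    rw [← pow_add]; simp [pow_mul]
  calc (-1:ℂ)^n * Complex.exp (z^2) * ((-1:ℂ)^n * aeval z (PH n) * Complex.exp (-z^2))
      = ((-1:ℂ)^n * (-1:ℂ)^n) * (Complex.exp (z^2) * Complex.exp (-z^2)) * aeval z (PH n) := by
        ring
    _ = aeval z (PH n) := by rw [this, hsq]; ring

lemma iter_exp_real (n : ℕ) :
    iteratedDeriv n (fun y : ℝ => Real.exp (-y^2)) =
      fun x => (-1:ℝ)^n * (PH n).eval x * Real.exp (-x^2) := by
  induction n with
  | zero => funext x; simp [PH]
  | succ m ih =>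
    funext x
    rw [iteratedDeriv_succ, ih]
    have hd1 : DifferentiableAt ℝ (fun x : ℝ => (-1:ℝ)^m * (PH m).eval x) x :=
      ((PH m).differentiable x).const_mul _
    have hd2 : DifferentiableAt ℝ (fun x : ℝ => Real.exp (-x^2)) x :=
      (Real.differentiable_exp.comp ((differentiable_id.pow 2).neg)) x
    rw [show (fun x : ℝ => (-1:ℝ)^m * (PH m).eval x * Real.exp (-x^2)) =
      (fun x : ℝ => ((-1:ℝ)^m * (PH m).eval x) * Real.exp (-x^2)) from rfl]
    rw [deriv_fun_mul hd1 hd2, deriv_const_mul _ ((PH m).differentiable x), Polynomial.deriv]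
    have : deriv (fun x : ℝ => Real.exp (-x^2)) x = (-2*x) * Real.exp (-x^2) := by
      have h1 : HasDerivAt (fun x : ℝ => -x^2) (-(2*x)) x := by
        simpa [Pi.neg_def] using ((hasDerivAt_pow 2 x).neg)
      have h : HasDerivAt (fun x : ℝ => Real.exp (-x^2)) ((-2*x) * Real.exp (-x^2)) x := by
        simpa [mul_comm] using h1.exp
      exact h.deriv
    rw [this]
    have hP : PH (m+1) = 2 * X * PH m - derivative (PH m) := rfl
    rw [hP]
    simp only [eval_sub, eval_mul, eval_X, eval_ofNat]
    ring

lemma physHermite_eq (n : ℕ) : physHermite n = fun x => (PH n).eval x := by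
  funext x
  unfold physHermite
  rw [iter_exp_real]
  have : Real.exp (x^2) * Real.exp (-x^2) = 1 := by
    rw [← Real.exp_add]; ring_nf; exact Real.exp_zero
  have hsq : ((-1:ℝ)^n * ((-1:ℝ)^n) : ℝ) = 1 := by
    rw [← pow_add]; simp [pow_mul]
  calc (-1:ℝ)^n * Real.exp (x^2) * ((-1:ℝ)^n * (PH n).eval x * Real.exp (-x^2))
      = ((-1:ℝ)^n * (-1:ℝ)^n) * (Real.exp (x^2) * Real.exp (-x^2)) * (PH n).eval x := by ring
    _ = (PH n).eval x := by rw [this, hsq]; ring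

open Complex in
lemma PH_comp_I (n : ℕ) :
    ((PH n).map (algebraMap ℝ ℂ)).comp (C I * X) = (I^n) • ((QH n).map (algebraMap ℝ ℂ)) := by
  induction n with
  | zero =>
    rw [show PH 0 = 1 from rfl, show QH 0 = 1 from rfl]
    rw [Polynomial.map_one, one_comp, pow_zero, one_smul]
  | succ m ih =>
    have hP : PH (m+1) = 2 * X * PH m - derivative (PH m) := rfl
    have hQ : QH (m+1) = 2 * X * QH m + derivative (QH m) := rfl
    have hder : ((derivative (PH m)).map (algebraMap ℝ ℂ)).comp (C I * X)
        = ((-I) * I^m) • ((derivative (QH m)).map (algebraMap ℝ ℂ)) := by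
      have h1 : derivative (((PH m).map (algebraMap ℝ ℂ)).comp (C I * X))
          = C I * ((derivative (PH m)).map (algebraMap ℝ ℂ)).comp (C I * X) := by
        rw [derivative_comp, derivative_map]
        rw [show derivative (C I * X) = C I by
          rw [derivative_C_mul, derivative_X, mul_one]]
      have h2 : derivative ((I^m) • ((QH m).map (algebraMap ℝ ℂ)))
          = (I^m) • ((derivative (QH m)).map (algebraMap ℝ ℂ)) := by
        rw [derivative_smul, derivative_map]
      have hthis := congrArg derivative ih
      rw [h1, h2] at hthis
      have hIs : I • (((derivative (PH m)).map (algebraMap ℝ ℂ)).comp (C I * X))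
          = (I^m) • ((derivative (QH m)).map (algebraMap ℝ ℂ)) := by
        rw [smul_eq_C_mul]; exact hthis
      calc ((derivative (PH m)).map (algebraMap ℝ ℂ)).comp (C I * X)
          = I⁻¹ • (I • (((derivative (PH m)).map (algebraMap ℝ ℂ)).comp (C I * X))) := by
            rw [smul_smul, inv_mul_cancel₀ Complex.I_ne_zero, one_smul]
        _ = I⁻¹ • ((I^m) • ((derivative (QH m)).map (algebraMap ℝ ℂ))) := by rw [hIs]
        _ = ((-I) * I^m) • ((derivative (QH m)).map (algebraMap ℝ ℂ)) := by
            rw [smul_smul, Complex.inv_I]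
    rw [hP, hQ]
    simp only [Polynomial.map_sub, Polynomial.map_add, Polynomial.map_mul, Polynomial.map_ofNat,
      Polynomial.map_X, sub_comp, mul_comp, X_comp, ofNat_comp, ih, hder]
    simp only [smul_eq_C_mul, map_mul, map_pow, map_neg]
    ring_nf

open Complex in
lemma conjHermite_eq (n : ℕ) : conjHermite n = fun x => (QH n).eval x := by
  funext x
  unfold conjHermite
  rw [hermiteC_eq]
  have h1 : (aeval (I * (x:ℂ)) (PH n) : ℂ)
      = (((PH n).map (algebraMap ℝ ℂ)).comp (C I * X)).eval (x:ℂ) := by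
    rw [eval_comp, eval_mul, eval_C, eval_X, aeval_def, eval_map]
  rw [h1, PH_comp_I]
  have h2 : ((QH n).map (algebraMap ℝ ℂ)).eval (x:ℂ) = ((((QH n).eval x : ℝ)) : ℂ) := by
    rw [eval_map, show ((x:ℂ)) = algebraMap ℝ ℂ x from rfl, Polynomial.eval₂_hom]
    rfl
  rw [eval_smul, h2]
  have h3 : (I:ℂ) ^ (-(n:ℤ)) * (I ^ n • ((((QH n).eval x : ℝ)) : ℂ)) = ((((QH n).eval x : ℝ)) : ℂ) := by
    rw [smul_eq_mul, ← mul_assoc, zpow_neg, zpow_natCast,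
      inv_mul_cancel₀ (pow_ne_zero _ Complex.I_ne_zero), one_mul]
  rw [h3, Complex.ofReal_re]

lemma deriv_exp_row (n : ℕ) :
    deriv (fun y : ℝ => Real.exp (y^2) * (QH n).eval y)
      = fun y => Real.exp (y^2) * (QH (n+1)).eval y := by
  funext y
  have hd1 : DifferentiableAt ℝ (fun y : ℝ => Real.exp (y^2)) y :=
    (Real.differentiable_exp.comp (differentiable_id.pow 2)) y
  have hde : deriv (fun y : ℝ => Real.exp (y^2)) y = 2*y * Real.exp (y^2) := by
    have h1 : HasDerivAt (fun y : ℝ => (y:ℝ)^2) (2*y) y := by simpa using hasDerivAt_pow 2 y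
    have h : HasDerivAt (fun y : ℝ => Real.exp (y^2)) (2*y * Real.exp (y^2)) y := by
      simpa [mul_comm] using h1.exp
    exact h.deriv
  rw [deriv_fun_mul hd1 ((QH n).differentiable y), hde, Polynomial.deriv]
  rw [show QH (n+1) = 2 * X * QH n + derivative (QH n) from rfl]
  simp only [eval_add, eval_mul, eval_X, eval_ofNat]
  ring

lemma iteratedDeriv_cmul (c : ℝ) (f : ℝ → ℝ) (n : ℕ) :
    iteratedDeriv n (fun y => c * f y) = fun x => c * iteratedDeriv n f x := by
  induction n generalizing f with
  | zero => simp
  | succ m ih =>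
    rw [iteratedDeriv_succ', iteratedDeriv_succ']
    rw [show (deriv fun y => c * f y) = fun y => c * deriv f y from deriv_const_mul_field' c]
    exact ih (deriv f)

lemma iteratedDeriv_one_fun (j : ℕ) (x : ℝ) :
    iteratedDeriv j (fun _ : ℝ => (1:ℝ)) x = if j = 0 then 1 else 0 := by
  cases j with
  | zero => simp
  | succ m =>
    rw [iteratedDeriv_succ']
    have : (deriv fun _ : ℝ => (1:ℝ)) = fun _ : ℝ => (0:ℝ) := by
      funext y; exact deriv_const y 1
    rw [this]
    have h0 : ∀ k, iteratedDeriv k (fun _ : ℝ => (0:ℝ)) x = 0 := by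
      intro k
      induction k with
      | zero => simp
      | succ l ihl =>
        rw [iteratedDeriv_succ']
        simpa [show (deriv fun _ : ℝ => (0:ℝ)) = fun _ : ℝ => (0:ℝ) from funext fun y => deriv_const y 0]
    simp [h0 m]

lemma strictAnti_fin_unique {n m : ℕ} {f : Fin n → ℕ} {g : Fin m → ℕ}
    (hf : StrictAnti f) (hg : StrictAnti g) (h : Set.range f = Set.range g) :
    ∃ e : n = m, ∀ i : Fin n, f i = g (Fin.cast e i) := by
  have hsf : ((Finset.univ.image f : Finset ℕ) : Set ℕ) = Set.range f := by simp
  have hsg : ((Finset.univ.image g : Finset ℕ) : Set ℕ) = Set.range g := by simp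
  have hset : Finset.univ.image f = Finset.univ.image g :=
    Finset.coe_injective (by rw [hsf, hsg, h])
  have hcf : (Finset.univ.image f).card = n := by
    rw [Finset.card_image_of_injective _ hf.injective, Finset.card_univ, Fintype.card_fin]
  have e : n = m := by
    rw [← hcf, hset, Finset.card_image_of_injective _ hg.injective, Finset.card_univ,
      Fintype.card_fin]
  subst e
  refine ⟨rfl, ?_⟩
  have hmf : StrictMono (fun i : Fin n => f i.rev) := fun i j hij => hf (by rwa [Fin.rev_lt_rev])
  have hmg : StrictMono (fun i : Fin n => g i.rev) := fun i j hij => hg (by rwa [Fin.rev_lt_rev])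
  have h1 := Finset.orderEmbOfFin_unique hcf
    (f := fun i : Fin n => f i.rev) (fun i => Finset.mem_image_of_mem f (Finset.mem_univ _)) hmf
  have h2 := Finset.orderEmbOfFin_unique hcf
    (f := fun i : Fin n => g i.rev)
    (fun i => by rw [hset]; exact Finset.mem_image_of_mem g (Finset.mem_univ _)) hmg
  intro i
  have h3 := congrFun (h1.trans h2.symm) i.rev
  simpa [Fin.rev_rev] using h3


lemma mayaMinus_shift {M : Set ℤ} (h0 : (0:ℤ) ∈ M) :
    MayaMinus (shiftM M 1) = (fun a => a + 1) '' MayaMinus M := by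
  ext a
  simp only [MayaMinus, shiftM, Set.mem_setOf_eq, Set.mem_image]
  constructor
  · intro ha
    have ha' : (-(a:ℤ)) ∉ M := by
      rwa [show (-(a:ℤ)) = -(a:ℤ) - 1 + 1 from by ring]
    match a with
    | 0 => exact absurd h0 (by simpa using ha')
    | c+1 =>
      refine ⟨c, ?_, rfl⟩
      show (-(c:ℤ) - 1) ∉ M
      rwa [show (-(c:ℤ) - 1) = -((c+1:ℕ):ℤ) from by push_cast; ring]
  · rintro ⟨c, hc, rfl⟩
    show (-((c+1:ℕ):ℤ) - 1 + 1) ∉ M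
    rwa [show (-((c+1:ℕ):ℤ) - 1 + 1) = -(c:ℤ) - 1 from by push_cast; ring]

lemma mayaPlus_shift {M : Set ℤ} :
    MayaPlus (shiftM M 1) = {a : ℕ | a + 1 ∈ MayaPlus M} := by
  ext a
  simp only [MayaPlus, shiftM, Set.mem_setOf_eq]
  rw [show ((a:ℤ) + 1) = ((a+1:ℕ):ℤ) from by push_cast; ring]


lemma det_step {N : ℕ} (g : Fin (N+1) → ℝ → ℝ) (g' : Fin N → ℝ → ℝ) (c : Fin N → ℝ)
    (P : Fin (N+1)) (x : ℝ)
    (hrow : ∀ k : ℕ, iteratedDeriv k (g P) x = if k = 0 then 1 else 0)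
    (hder : ∀ i : Fin N, deriv (g (P.succAbove i)) = fun y => c i * g' i y) :
    (Matrix.of fun i k : Fin (N+1) => iteratedDeriv (k:ℕ) (g i) x).det
      = (-1:ℝ)^(P:ℕ) * (∏ i, c i) *
        (Matrix.of fun i k : Fin N => iteratedDeriv (k:ℕ) (g' i) x).det := by
  rw [Matrix.det_succ_row _ P]
  rw [Finset.sum_eq_single (0 : Fin (N+1))]
  · have h00 : (Matrix.of fun i k : Fin (N+1) => iteratedDeriv (k:ℕ) (g i) x) P 0 = 1 := by
      show iteratedDeriv (((0:Fin (N+1)):ℕ)) (g P) x = 1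
      rw [hrow]
      simp
    rw [h00]
    have hsub : ((Matrix.of fun i k : Fin (N+1) => iteratedDeriv (k:ℕ) (g i) x).submatrix
        P.succAbove (0:Fin (N+1)).succAbove)
        = Matrix.of (fun i k : Fin N => c i * iteratedDeriv (k:ℕ) (g' i) x) := by
      ext i k
      show iteratedDeriv (((0:Fin (N+1)).succAbove k : ℕ)) (g (P.succAbove i)) x = _
      have hcol : ((0:Fin (N+1)).succAbove k : ℕ) = (k:ℕ)+1 := by
        rw [Fin.zero_succAbove, Fin.val_succ]
      rw [hcol, iteratedDeriv_succ', hder i, iteratedDeriv_cmul]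
      rfl
    have hd := Matrix.det_mul_column c (Matrix.of fun i k : Fin N => iteratedDeriv (k:ℕ) (g' i) x)
    rw [hsub, show (Matrix.of fun i k : Fin N => c i * iteratedDeriv (k:ℕ) (g' i) x)
      = Matrix.of (fun i k : Fin N => c i *
        (Matrix.of fun i' k' : Fin N => iteratedDeriv (k':ℕ) (g' i') x) i k) from rfl, hd]
    simp only [Fin.val_zero, add_zero]
    ring
  · intro j _ hj
    have hz : (Matrix.of fun i k : Fin (N+1) => iteratedDeriv (k:ℕ) (g i) x) P j = 0 := by
      show iteratedDeriv ((j:ℕ)) (g P) x = 0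
      rw [hrow, if_neg]
      exact fun h => hj (Fin.ext (by simpa using h))
    rw [hz]
    ring
  · intro h; exact absurd (Finset.mem_univ _) h


lemma pW_step (p q₀ : ℕ) (s : Fin p → ℕ) (t : Fin (q₀+1) → ℕ)
    (hlast : t ⟨q₀, by omega⟩ = 0)
    (htpos : ∀ b : Fin q₀, 1 ≤ t (Fin.castSucc b)) (x : ℝ) :
    pW p (q₀+1) s t x
      = (-1:ℝ)^p * 2^q₀ * (∏ b : Fin q₀, (t (Fin.castSucc b) : ℝ)) *
        pW p q₀ (fun i => s i + 1) (fun b => t (Fin.castSucc b) - 1) x := by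
  have hplt : p < p + q₀ + 1 := by omega
  have hrow : ∀ k : ℕ, iteratedDeriv k ((fun (i : Fin (p + q₀ + 1)) (y : ℝ) =>
    if h : (i : ℕ) < p then Real.exp (y ^ 2) * conjHermite (s ⟨(i : ℕ), h⟩) y
    else physHermite (t ⟨p + (q₀+1) - 1 - (i : ℕ), by have := i.isLt; omega⟩) y) ⟨p, hplt⟩) x = if k = 0 then 1 else 0 := by
    intro k
    have hgP : ((fun (i : Fin (p + q₀ + 1)) (y : ℝ) =>
    if h : (i : ℕ) < p then Real.exp (y ^ 2) * conjHermite (s ⟨(i : ℕ), h⟩) y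
    else physHermite (t ⟨p + (q₀+1) - 1 - (i : ℕ), by have := i.isLt; omega⟩) y) ⟨p, hplt⟩) = fun _ : ℝ => (1:ℝ) := by
      funext y
      show (if h : ((⟨p, hplt⟩ : Fin (p + q₀ + 1)) : ℕ) < p then _ else _) = (1:ℝ)
      rw [dif_neg (show ¬ (((⟨p, hplt⟩ : Fin (p + q₀ + 1)) : ℕ) < p) from by simp)]
      rw [show (⟨p + (q₀+1) - 1 - ((⟨p, hplt⟩ : Fin (p + q₀ + 1)) : ℕ),
          by have hv : ((⟨p, hplt⟩ : Fin (p + q₀ + 1)) : ℕ) = p := rfl; omega⟩ : Fin (q₀+1))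
          = ⟨q₀, by omega⟩ from Fin.ext (by
            show p + (q₀+1) - 1 - ((⟨p, hplt⟩ : Fin (p + q₀ + 1)) : ℕ) = q₀
            have hv : ((⟨p, hplt⟩ : Fin (p + q₀ + 1)) : ℕ) = p := rfl
            omega)]
      rw [hlast, physHermite_eq]
      show Polynomial.eval y (PH 0) = 1
      rw [show PH 0 = 1 from rfl, Polynomial.eval_one]
    rw [hgP]
    exact iteratedDeriv_one_fun k x
  have hder : ∀ i : Fin (p + q₀),
      deriv ((fun (i : Fin (p + q₀ + 1)) (y : ℝ) =>
    if h : (i : ℕ) < p then Real.exp (y ^ 2) * conjHermite (s ⟨(i : ℕ), h⟩) y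
    else physHermite (t ⟨p + (q₀+1) - 1 - (i : ℕ), by have := i.isLt; omega⟩) y) (Fin.succAbove ⟨p, hplt⟩ i)) = fun y => (fun (i : Fin (p + q₀)) =>
    if h : (i : ℕ) < p then (1:ℝ)
    else 2 * (t (Fin.castSucc ⟨p + q₀ - 1 - (i : ℕ), by have := i.isLt; omega⟩) : ℝ)) i * (fun (i : Fin (p + q₀)) (y : ℝ) =>
    if h : (i : ℕ) < p then Real.exp (y ^ 2) * conjHermite (s ⟨(i : ℕ), h⟩ + 1) y
    else physHermite (t (Fin.castSucc ⟨p + q₀ - 1 - (i : ℕ), by have := i.isLt; omega⟩) - 1) y) i y := by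
    intro i
    by_cases h : (i : ℕ) < p
    · have hsa : Fin.succAbove ⟨p, hplt⟩ i = Fin.castSucc i :=
        Fin.succAbove_of_castSucc_lt _ _ (by rw [Fin.lt_def]; simpa using h)
      rw [hsa]
      have hg : ((fun (i : Fin (p + q₀ + 1)) (y : ℝ) =>
    if h : (i : ℕ) < p then Real.exp (y ^ 2) * conjHermite (s ⟨(i : ℕ), h⟩) y
    else physHermite (t ⟨p + (q₀+1) - 1 - (i : ℕ), by have := i.isLt; omega⟩) y) (Fin.castSucc i)) = fun y => Real.exp (y ^ 2) * (QH (s ⟨(i:ℕ), h⟩)).eval y := by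
        funext y
        beta_reduce
        rw [dif_pos (show ((Fin.castSucc i : Fin (p + q₀ + 1)) : ℕ) < p from by simpa using h)]
        rw [show (⟨((Fin.castSucc i : Fin (p + q₀ + 1)) : ℕ), by simpa using h⟩ : Fin p)
          = ⟨(i:ℕ), h⟩ from Fin.ext (by simp)]
        rw [conjHermite_eq]
      rw [hg, deriv_exp_row]
      funext y
      rw [show (fun (i : Fin (p + q₀)) =>
    if h : (i : ℕ) < p then (1:ℝ)
    else 2 * (t (Fin.castSucc ⟨p + q₀ - 1 - (i : ℕ), by have := i.isLt; omega⟩) : ℝ)) i = 1 from dif_pos h, one_mul]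
      rw [show (fun (i : Fin (p + q₀)) (y : ℝ) =>
    if h : (i : ℕ) < p then Real.exp (y ^ 2) * conjHermite (s ⟨(i : ℕ), h⟩ + 1) y
    else physHermite (t (Fin.castSucc ⟨p + q₀ - 1 - (i : ℕ), by have := i.isLt; omega⟩) - 1) y) i y
        = Real.exp (y ^ 2) * conjHermite (s ⟨(i:ℕ), h⟩ + 1) y from dif_pos h]
      rw [conjHermite_eq]
    · have hsa : Fin.succAbove ⟨p, hplt⟩ i = Fin.succ i :=
        Fin.succAbove_of_le_castSucc _ _ (by rw [Fin.le_def]; simp; omega)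
      rw [hsa]
      have hblt : p + q₀ - 1 - (i : ℕ) < q₀ := by have := i.isLt; omega
      have hg : ((fun (i : Fin (p + q₀ + 1)) (y : ℝ) =>
    if h : (i : ℕ) < p then Real.exp (y ^ 2) * conjHermite (s ⟨(i : ℕ), h⟩) y
    else physHermite (t ⟨p + (q₀+1) - 1 - (i : ℕ), by have := i.isLt; omega⟩) y) (Fin.succ i))
          = fun y => (PH (t (Fin.castSucc ⟨p + q₀ - 1 - (i : ℕ), hblt⟩))).eval y := by
        funext y
        beta_reduce
        rw [dif_neg (show ¬ (((Fin.succ i : Fin (p + q₀ + 1)) : ℕ) < p) from by simp; omega)]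
        rw [show (⟨p + (q₀+1) - 1 - ((Fin.succ i : Fin (p + q₀ + 1)) : ℕ), by simp; omega⟩ : Fin (q₀+1))
          = Fin.castSucc ⟨p + q₀ - 1 - (i : ℕ), hblt⟩ from Fin.ext (by simp; omega)]
        rw [physHermite_eq]
      rw [hg]
      have hm1 : 1 ≤ t (Fin.castSucc ⟨p + q₀ - 1 - (i : ℕ), hblt⟩) := htpos _
      have hder2 : deriv (fun y => (PH (t (Fin.castSucc ⟨p + q₀ - 1 - (i : ℕ), hblt⟩))).eval y)
          = fun y => (2 * (t (Fin.castSucc ⟨p + q₀ - 1 - (i : ℕ), hblt⟩) : ℝ)) *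
              (PH (t (Fin.castSucc ⟨p + q₀ - 1 - (i : ℕ), hblt⟩) - 1)).eval y := by
        funext y
        rw [Polynomial.deriv]
        have hk : t (Fin.castSucc ⟨p + q₀ - 1 - (i : ℕ), hblt⟩)
            = (t (Fin.castSucc ⟨p + q₀ - 1 - (i : ℕ), hblt⟩) - 1) + 1 := by omega
        rw [hk, derivative_PH]
        simp only [Polynomial.eval_mul, Polynomial.eval_C]
        push_cast
        ring_nf
      rw [hder2]
      funext y
      rw [show (fun (i : Fin (p + q₀)) =>
    if h : (i : ℕ) < p then (1:ℝ)
    else 2 * (t (Fin.castSucc ⟨p + q₀ - 1 - (i : ℕ), by have := i.isLt; omega⟩) : ℝ)) i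
        = 2 * (t (Fin.castSucc ⟨p + q₀ - 1 - (i : ℕ), hblt⟩) : ℝ) from dif_neg h]
      rw [show (fun (i : Fin (p + q₀)) (y : ℝ) =>
    if h : (i : ℕ) < p then Real.exp (y ^ 2) * conjHermite (s ⟨(i : ℕ), h⟩ + 1) y
    else physHermite (t (Fin.castSucc ⟨p + q₀ - 1 - (i : ℕ), by have := i.isLt; omega⟩) - 1) y) i y
        = physHermite (t (Fin.castSucc ⟨p + q₀ - 1 - (i : ℕ), hblt⟩) - 1) y from dif_neg h]
      rw [physHermite_eq]
  have hdet := det_step (fun (i : Fin (p + q₀ + 1)) (y : ℝ) =>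
    if h : (i : ℕ) < p then Real.exp (y ^ 2) * conjHermite (s ⟨(i : ℕ), h⟩) y
    else physHermite (t ⟨p + (q₀+1) - 1 - (i : ℕ), by have := i.isLt; omega⟩) y) (fun (i : Fin (p + q₀)) (y : ℝ) =>
    if h : (i : ℕ) < p then Real.exp (y ^ 2) * conjHermite (s ⟨(i : ℕ), h⟩ + 1) y
    else physHermite (t (Fin.castSucc ⟨p + q₀ - 1 - (i : ℕ), by have := i.isLt; omega⟩) - 1) y) (fun (i : Fin (p + q₀)) =>
    if h : (i : ℕ) < p then (1:ℝ)
    else 2 * (t (Fin.castSucc ⟨p + q₀ - 1 - (i : ℕ), by have := i.isLt; omega⟩) : ℝ)) ⟨p, hplt⟩ x hrow hder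
  have hprod : (∏ i : Fin (p + q₀), (fun (i : Fin (p + q₀)) =>
    if h : (i : ℕ) < p then (1:ℝ)
    else 2 * (t (Fin.castSucc ⟨p + q₀ - 1 - (i : ℕ), by have := i.isLt; omega⟩) : ℝ)) i)
      = 2^q₀ * ∏ b : Fin q₀, (t (Fin.castSucc b) : ℝ) := by
    rw [Fin.prod_univ_add]
    have h1 : ∀ i : Fin p, (fun (i : Fin (p + q₀)) =>
    if h : (i : ℕ) < p then (1:ℝ)
    else 2 * (t (Fin.castSucc ⟨p + q₀ - 1 - (i : ℕ), by have := i.isLt; omega⟩) : ℝ)) (Fin.castAdd q₀ i) = 1 := by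
      intro i
      exact dif_pos (by simpa using i.isLt)
    have h2 : ∀ j : Fin q₀, (fun (i : Fin (p + q₀)) =>
    if h : (i : ℕ) < p then (1:ℝ)
    else 2 * (t (Fin.castSucc ⟨p + q₀ - 1 - (i : ℕ), by have := i.isLt; omega⟩) : ℝ)) (Fin.natAdd p j) = 2 * (t (Fin.castSucc (Fin.rev j)) : ℝ) := by
      intro j
      beta_reduce
      rw [dif_neg (by simp)]
      exact congrArg (fun z => 2 * ((t (Fin.castSucc z) : ℕ) : ℝ))
        (Fin.ext (by simp only [Fin.val_rev, Fin.coe_natAdd, Fin.val_mk]; omega))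
    rw [Finset.prod_congr rfl (fun i _ => h1 i), Finset.prod_const_one, one_mul]
    rw [Finset.prod_congr rfl (fun j _ => h2 j)]
    rw [Finset.prod_mul_distrib, Finset.prod_const, Finset.card_univ, Fintype.card_fin]
    congr 1
    exact Fintype.prod_bijective Fin.rev Fin.rev_involutive.bijective _ _ (fun j => rfl)
  calc pW p (q₀+1) s t x
      = Real.exp (-(p:ℝ) * x ^ 2) *
          (Matrix.of fun i k : Fin (p + q₀ + 1) => iteratedDeriv (k : ℕ) ((fun (i : Fin (p + q₀ + 1)) (y : ℝ) =>
    if h : (i : ℕ) < p then Real.exp (y ^ 2) * conjHermite (s ⟨(i : ℕ), h⟩) y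
    else physHermite (t ⟨p + (q₀+1) - 1 - (i : ℕ), by have := i.isLt; omega⟩) y) i) x).det := rfl
    _ = Real.exp (-(p:ℝ) * x ^ 2) * ((-1:ℝ)^p * (∏ i : Fin (p + q₀), (fun (i : Fin (p + q₀)) =>
    if h : (i : ℕ) < p then (1:ℝ)
    else 2 * (t (Fin.castSucc ⟨p + q₀ - 1 - (i : ℕ), by have := i.isLt; omega⟩) : ℝ)) i) *
          (Matrix.of fun i k : Fin (p + q₀) => iteratedDeriv (k : ℕ) ((fun (i : Fin (p + q₀)) (y : ℝ) =>
    if h : (i : ℕ) < p then Real.exp (y ^ 2) * conjHermite (s ⟨(i : ℕ), h⟩ + 1) y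
    else physHermite (t (Fin.castSucc ⟨p + q₀ - 1 - (i : ℕ), by have := i.isLt; omega⟩) - 1) y) i) x).det) := by
        rw [hdet]
    _ = (-1:ℝ)^p * 2^q₀ * (∏ b : Fin q₀, (t (Fin.castSucc b) : ℝ)) *
          (Real.exp (-(p:ℝ) * x ^ 2) *
            (Matrix.of fun i k : Fin (p + q₀) => iteratedDeriv (k : ℕ) ((fun (i : Fin (p + q₀)) (y : ℝ) =>
    if h : (i : ℕ) < p then Real.exp (y ^ 2) * conjHermite (s ⟨(i : ℕ), h⟩ + 1) y
    else physHermite (t (Fin.castSucc ⟨p + q₀ - 1 - (i : ℕ), by have := i.isLt; omega⟩) - 1) y) i) x).det) := by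
        rw [hprod]; ring
    _ = (-1:ℝ)^p * 2^q₀ * (∏ b : Fin q₀, (t (Fin.castSucc b) : ℝ)) *
          pW p q₀ (fun i => s i + 1) (fun b => t (Fin.castSucc b) - 1) x := rfl

/-- Lemma `shift1`. If `0 ∈ M` and `M' = M - 1`, then
`H_M = (−1)^p 2^{q−1} (∏_{b=1}^{q−1} t_b) H_{M'}`. -/
theorem pseudoWronskian_shift_down (M : Set ℤ) (hM : IsMaya M) (h0 : (0 : ℤ) ∈ M)
    {p q p' q' : ℕ} (s : Fin p → ℕ) (t : Fin q → ℕ)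
    (s' : Fin p' → ℕ) (t' : Fin q' → ℕ)
    (hf : IsFrobenius M s t) (hf' : IsFrobenius (shiftM M 1) s' t') :
    ∀ x : ℝ,
      pW p q s t x =
        (-1 : ℝ) ^ p * 2 ^ (q - 1) *
          (∏ b : Fin (q - 1), (t (Fin.castLE (Nat.sub_le q 1) b) : ℝ)) *
          pW p' q' s' t' x := by
  obtain ⟨hsA, htA, hsR, htR⟩ := hf
  obtain ⟨hsA', htA', hsR', htR'⟩ := hf'
  -- 0 is in the range of t
  have h0p : (0:ℕ) ∈ Set.range t := by
    rw [htR]; show ((0:ℕ):ℤ) ∈ M; simpa using h0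
  obtain ⟨j0, hj0⟩ := h0p
  obtain ⟨q₀, rfl⟩ : ∃ q₀, q = q₀ + 1 := ⟨q - 1, by have := j0.isLt; omega⟩
  -- the last value of t is 0
  have hlast : t ⟨q₀, by omega⟩ = 0 := by
    rcases lt_or_eq_of_le (Fin.le_last j0) with hlt | heq
    · exact absurd (hj0 ▸ htA hlt) (by omega)
    · rw [show (⟨q₀, by omega⟩ : Fin (q₀+1)) = j0 from (Fin.ext (by rw [heq]; rfl)), hj0]
  -- identify s'
  have hS'r : Set.range (fun i => s i + 1) = Set.range s' := by
    rw [hsR', mayaMinus_shift h0, ← hsR]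
    ext a
    simp only [Set.mem_range, Set.mem_image]
    constructor
    · rintro ⟨i, rfl⟩; exact ⟨s i, ⟨i, rfl⟩, rfl⟩
    · rintro ⟨b, ⟨i, rfl⟩, rfl⟩; exact ⟨i, rfl⟩
  obtain ⟨ep, hsv⟩ := strictAnti_fin_unique
    (show StrictAnti (fun i => s i + 1) from fun i j hij => by
      show s j + 1 < s i + 1
      have := hsA hij; omega) hsA' hS'r
  subst ep
  -- identify t'
  have htpos : ∀ b : Fin q₀, 1 ≤ t (Fin.castSucc b) := by
    intro b
    have hblt : Fin.castSucc b < (⟨q₀, by omega⟩ : Fin (q₀+1)) := by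
      rw [Fin.lt_def]; exact b.isLt
    have := htA hblt
    omega
  have hT'r : Set.range (fun b : Fin q₀ => t (Fin.castSucc b) - 1) = Set.range t' := by
    rw [htR', mayaPlus_shift]
    ext a
    simp only [Set.mem_range, Set.mem_setOf_eq]
    constructor
    · rintro ⟨b, rfl⟩
      have h1 := htpos b
      have : t (Fin.castSucc b) - 1 + 1 = t (Fin.castSucc b) := by omega
      rw [this, ← htR]
      exact ⟨Fin.castSucc b, rfl⟩
    · intro ha
      rw [← htR] at ha
      obtain ⟨j, hj⟩ := ha
      have hjlt : j < (⟨q₀, by omega⟩ : Fin (q₀+1)) := by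
        rcases lt_or_eq_of_le (Fin.le_last j) with hlt | heq
        · rwa [show (⟨q₀, by omega⟩ : Fin (q₀+1)) = Fin.last q₀ from rfl]
        · rw [heq] at hj
          rw [show Fin.last q₀ = (⟨q₀, by omega⟩ : Fin (q₀+1)) from rfl, hlast] at hj
          omega
      refine ⟨⟨(j:ℕ), by rwa [Fin.lt_def] at hjlt⟩, ?_⟩
      rw [show Fin.castSucc (⟨(j:ℕ), _⟩ : Fin q₀) = j from Fin.ext rfl, hj]
      omega
  obtain ⟨eq', htv⟩ := strictAnti_fin_unique
    (show StrictAnti (fun b : Fin q₀ => t (Fin.castSucc b) - 1) from fun i j hij => by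
      show t (Fin.castSucc j) - 1 < t (Fin.castSucc i) - 1
      have h1 := htA (show Fin.castSucc i < Fin.castSucc j from by
        rw [Fin.lt_def]; exact hij)
      have h2 := htpos i
      have h3 := htpos j
      omega) htA' hT'r
  subst eq'
  have hsv' : ∀ i : Fin p, s' i = s i + 1 := by
    intro i
    have := hsv i
    simpa using this.symm
  have htv' : ∀ b : Fin q₀, t' b = t (Fin.castSucc b) - 1 := by
    intro b
    have := htv b
    simpa using this.symm
  intro x
  have hs'f : s' = fun i => s i + 1 := funext fun i => hsv' i
  have ht'f : t' = fun b => t (Fin.castSucc b) - 1 := funext fun b => htv' b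
  subst hs'f
  subst ht'f
  show pW p (q₀+1) s t x
      = (-1:ℝ)^p * 2^q₀ * (∏ b : Fin q₀, (t (Fin.castSucc b) : ℝ)) *
        pW p q₀ (fun i => s i + 1) (fun b => t (Fin.castSucc b) - 1) x
  exact pW_step p q₀ s t hlast htpos x
end

section
/- Let M ⊆ ℤ be a Maya diagram with bent diagram {(i_n, j_n)}_{n∈ℤ}, with associated partition λ = (λ₁, …, λ_ℓ) of length ℓ, and let F be the Ferrer's diagram of λ. If n ∈ ℤ is a minimal girth origin for M, then one of the following three possibilities holds: (a) (i_n, j_n) is an inside corner of F; (b) (i_n, j_n) = (0, ℓ); (c) (i_n, j_n) = (λ₁, 0). -/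
lemma fin_notin (M : Set ℤ) (hM : IsMaya M) (k : ℤ) :
    {x : ℤ | x ∉ M ∧ x < k}.Finite := by
  apply Set.Finite.subset (hM.2.union (Set.finite_Ico 0 k))
  rintro x ⟨hx, hxk⟩
  by_cases h : x < 0
  · exact Or.inl ⟨h, hx⟩
  · exact Or.inr ⟨le_of_not_gt h, hxk⟩

lemma fin_in (M : Set ℤ) (hM : IsMaya M) (k : ℤ) :
    {x : ℤ | x ∈ M ∧ k ≤ x}.Finite := by
  apply Set.Finite.subset (hM.1.union (Set.finite_Ico k 0))
  rintro x ⟨hx, hxk⟩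
  by_cases h : 0 ≤ x
  · exact Or.inl ⟨hx, h⟩
  · exact Or.inr ⟨hxk, lt_of_not_ge h⟩

lemma girth_shift (M : Set ℤ) (k : ℤ) :
    girth (shiftM M k) = iN M k + jN M k := by
  have h1 : (fun a : ℕ => k - 1 - (a : ℤ)) '' MayaMinus (shiftM M k)
      = {x : ℤ | x ∉ M ∧ x < k} := by
    ext x
    simp only [Set.mem_image, MayaMinus, shiftM, Set.mem_setOf_eq]
    constructor
    · rintro ⟨a, ha, rfl⟩
      refine ⟨by convert ha using 2; ring, by omega⟩
    · rintro ⟨hx, hxk⟩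
      refine ⟨(k - 1 - x).toNat, ?_, by omega⟩
      convert hx using 2
      omega
  have h2 : (fun a : ℕ => (a : ℤ) + k) '' MayaPlus (shiftM M k)
      = {x : ℤ | x ∈ M ∧ k ≤ x} := by
    ext x
    simp only [Set.mem_image, MayaPlus, shiftM, Set.mem_setOf_eq]
    constructor
    · rintro ⟨a, ha, rfl⟩
      exact ⟨ha, by omega⟩
    · rintro ⟨hx, hxk⟩
      refine ⟨(x - k).toNat, ?_, by omega⟩
      convert hx using 1
      omega
  have i1 : Function.Injective (fun a : ℕ => k - 1 - (a : ℤ)) := by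
    intro a b h; simpa using h
  have i2 : Function.Injective (fun a : ℕ => (a : ℤ) + k) := by
    intro a b h; simpa using h
  unfold girth iN jN
  rw [← h1, ← h2, Set.ncard_image_of_injective _ i1, Set.ncard_image_of_injective _ i2]

lemma iN_succ_mem (M : Set ℤ) (n : ℤ) (h : n ∈ M) :
    iN M (n + 1) = iN M n := by
  unfold iN
  congr 1
  ext x
  simp only [Set.mem_setOf_eq]
  constructor
  · rintro ⟨hx, hxn⟩
    refine ⟨hx, ?_⟩
    rcases lt_or_eq_of_le (by omega : x ≤ n) with h' | h'
    · exact h'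
    · exact absurd (h' ▸ h) hx
  · rintro ⟨hx, hxn⟩; exact ⟨hx, by omega⟩

lemma iN_succ_notmem (M : Set ℤ) (hM : IsMaya M) (n : ℤ) (h : n ∉ M) :
    iN M (n + 1) = iN M n + 1 := by
  unfold iN
  have hset : {x : ℤ | x ∉ M ∧ x < n + 1} = insert n {x : ℤ | x ∉ M ∧ x < n} := by
    ext x
    simp only [Set.mem_setOf_eq, Set.mem_insert_iff]
    constructor
    · rintro ⟨hx, hxn⟩
      rcases lt_or_eq_of_le (by omega : x ≤ n) with h' | h'
      · exact Or.inr ⟨hx, h'⟩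
      · exact Or.inl h'
    · rintro (rfl | ⟨hx, hxn⟩)
      · exact ⟨h, by omega⟩
      · exact ⟨hx, by omega⟩
  rw [hset, Set.ncard_insert_of_notMem (by simp) (fin_notin M hM n)]

lemma jN_succ_mem (M : Set ℤ) (hM : IsMaya M) (n : ℤ) (h : n ∈ M) :
    jN M n = jN M (n + 1) + 1 := by
  unfold jN
  have hset : {x : ℤ | x ∈ M ∧ n ≤ x} = insert n {x : ℤ | x ∈ M ∧ n + 1 ≤ x} := by
    ext x
    simp only [Set.mem_setOf_eq, Set.mem_insert_iff]
    constructor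
    · rintro ⟨hx, hxn⟩
      rcases lt_or_eq_of_le hxn with h' | h'
      · exact Or.inr ⟨hx, by omega⟩
      · exact Or.inl h'.symm
    · rintro (rfl | ⟨hx, hxn⟩)
      · exact ⟨h, le_refl _⟩
      · exact ⟨hx, by omega⟩
  rw [hset, Set.ncard_insert_of_notMem (by simp) (fin_in M hM (n + 1))]

lemma jN_succ_notmem (M : Set ℤ) (n : ℤ) (h : n ∉ M) :
    jN M n = jN M (n + 1) := by
  unfold jN
  congr 1
  ext x
  simp only [Set.mem_setOf_eq]
  constructor
  · rintro ⟨hx, hxn⟩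
    refine ⟨hx, ?_⟩
    rcases lt_or_eq_of_le hxn with h' | h'
    · omega
    · exact absurd (h' ▸ hx) h
  · rintro ⟨hx, hxn⟩; exact ⟨hx, by omega⟩

lemma min_origin_key (M : Set ℤ) (hM : IsMaya M) (n : ℤ)
    (hn : ∀ j : ℤ, girth (shiftM M n) ≤ girth (shiftM M j)) :
    n ∉ M ∧ (n - 1) ∈ M := by
  constructor
  · intro h
    have h1 := hn (n + 1)
    rw [girth_shift, girth_shift, iN_succ_mem M n h, jN_succ_mem M hM n h] at h1
    omega
  · by_contra h
    have h1 := hn (n - 1)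
    have h2 := iN_succ_notmem M hM (n - 1) h
    have h3 := jN_succ_notmem M (n - 1) h
    rw [girth_shift, girth_shift] at h1
    simp only [sub_add_cancel] at h2 h3
    omega

/-- At a minimal girth origin `n`, the point `(i_n, j_n)` of the bent
diagram is either an inside corner of the Ferrer's diagram `F` of the associated partition,
or `(0, ℓ)`, or `(λ₁, 0)`.  Here `lam` is the 0-based partition (`lam 0 = λ₁`) of length
`ℓ`, and `F = {(i,j) : 1 ≤ i, 1 ≤ j, i ≤ λ_j}`. -/
theorem minimal_girth_origin_cases (M : Set ℤ) (hM : IsMaya M)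
    (m : ℕ → ℤ) (hm : StrictAnti m) (hrange : Set.range m = M)
    (lam : ℕ → ℕ) (hlam : ∀ i : ℕ, lam i = {x : ℤ | x ∉ M ∧ x < m i}.ncard)
    (ℓ : ℕ) (hlen : ∀ i : ℕ, 0 < lam i ↔ i < ℓ)
    (F : Set (ℕ × ℕ))
    (hF : F = {p : ℕ × ℕ | 1 ≤ p.1 ∧ 1 ≤ p.2 ∧ p.1 ≤ lam (p.2 - 1)})
    (n : ℤ) (hn : ∀ j : ℤ, girth (shiftM M n) ≤ girth (shiftM M j)) :
    ((iN M n, jN M n) ∈ F ∧ (iN M n + 1, jN M n) ∈ F ∧ (iN M n, jN M n + 1) ∈ F ∧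
        (iN M n + 1, jN M n + 1) ∉ F) ∨
      (iN M n = 0 ∧ jN M n = ℓ) ∨
      (iN M n = lam 0 ∧ jN M n = 0) := by
  obtain ⟨hnM, hn1M⟩ := min_origin_key M hM n hn
  obtain ⟨j₀, hj₀⟩ : ∃ j₀, m j₀ = n - 1 := by
    have h : n - 1 ∈ Set.range m := by rw [hrange]; exact hn1M
    exact h
  have hjn : jN M n = j₀ := by
    have himg : {x : ℤ | x ∈ M ∧ n ≤ x} = m '' (Set.Iio j₀) := by
      ext x
      simp only [Set.mem_setOf_eq, Set.mem_image, Set.mem_Iio]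
      constructor
      · rintro ⟨hx, hxn⟩
        rw [← hrange] at hx
        obtain ⟨i, rfl⟩ := hx
        exact ⟨i, hm.lt_iff_gt.mp (by omega), rfl⟩
      · rintro ⟨i, hi, rfl⟩
        refine ⟨by rw [← hrange]; exact Set.mem_range_self i, ?_⟩
        have := hm hi
        omega
    unfold jN
    rw [himg, Set.ncard_image_of_injective _ hm.injective, ← Finset.coe_range,
      Set.ncard_coe_finset, Finset.card_range]
  have hiln : iN M n = lam (jN M n) := by
    rw [hlam, hjn, hj₀]
    unfold iN
    congr 1
    ext x
    simp only [Set.mem_setOf_eq]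
    constructor
    · rintro ⟨hx, hxn⟩
      refine ⟨hx, ?_⟩
      rcases lt_or_eq_of_le (by omega : x ≤ n - 1) with h' | h'
      · exact h'
      · exact absurd (h' ▸ hn1M) hx
    · rintro ⟨hx, hxn⟩; exact ⟨hx, by omega⟩
  have hkey : jN M n = 0 ∨ (1 ≤ jN M n ∧ iN M n + 1 ≤ lam (jN M n - 1)) := by
    rcases Nat.eq_zero_or_pos (jN M n) with h0 | hpos
    · exact Or.inl h0
    · right
      refine ⟨hpos, ?_⟩
      have hmlt : m (jN M n) < m (jN M n - 1) := hm (by omega)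
      have hmem : m (jN M n - 1) ∈ M := by rw [← hrange]; exact Set.mem_range_self _
      have hgt : n < m (jN M n - 1) := by
        have hne : m (jN M n - 1) ≠ n := fun h => hnM (h ▸ hmem)
        rw [hjn] at hmlt hne ⊢
        omega
      rw [hlam]
      have hsub : insert n {x : ℤ | x ∉ M ∧ x < n} ⊆ {x : ℤ | x ∉ M ∧ x < m (jN M n - 1)} := by
        rintro x (rfl | ⟨hx, hxn⟩)
        · exact ⟨hnM, hgt⟩
        · exact ⟨hx, by omega⟩
      have h1 : (insert n {x : ℤ | x ∉ M ∧ x < n}).ncard = iN M n + 1 :=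
        Set.ncard_insert_of_notMem (by simp) (fin_notin M hM n)
      rw [← h1]
      exact Set.ncard_le_ncard hsub (fin_notin M hM _)
  rcases hkey with hj0 | ⟨hj1, hcor⟩
  · exact Or.inr (Or.inr ⟨by rw [hiln, hj0], hj0⟩)
  · by_cases hi0 : iN M n = 0
    · refine Or.inr (Or.inl ⟨hi0, ?_⟩)
      have h1 : ¬ (jN M n < ℓ) := by
        rw [← hlen, ← hiln, hi0]
        omega
      have h2 : jN M n - 1 < ℓ := by
        rw [← hlen]
        omega
      omega
    · left
      subst hF
      simp only [Set.mem_setOf_eq, Nat.add_sub_cancel]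
      refine ⟨⟨by omega, hj1, by omega⟩, ⟨by omega, hj1, hcor⟩,
        ⟨by omega, by omega, by omega⟩, fun h => by omega⟩
end
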